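/- Uniqueness from strict dual feasibility: consider the convex program min over B ∈ ℝ^{p×r} of f(B) = (1/2n) Σ_{i=1}^r ‖y^i − X^i β^i‖₂² + λ ‖B‖_{1,∞} with λ > 0. Suppose B̂ with B̂_{U^c} = 0 is optimal, and there exists a dual matrix Z̃ in the subdifferential of ‖·‖_{1,∞} at B̂ satisfying the stationarity conditions and strictly Σ_{i=1}^r |Z̃_{j,i}| < 1 for every row j ∈ U^c. If additionally each matrix (X^i_U)ᵀ X^i_U is invertible, then every optimal solution B of the program satisfies B_{U^c} = 0, and the optimal solution is unique. -/

import Mathlib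

section helpers
variable {r : ℕ}

lemma aux_le_sup (v : Fin r → ℝ) (i : Fin r) : |v i| ≤ ⨆ i', |v i'| :=
  le_ciSup (Set.Finite.bddAbove (Set.finite_range fun i' => |v i'|)) i

lemma aux_sup_le [Nonempty (Fin r)] (v : Fin r → ℝ) {a : ℝ} (h : ∀ i, |v i| ≤ a) :
    (⨆ i, |v i|) ≤ a := ciSup_le h

lemma aux_sup_nonneg [Nonempty (Fin r)] (v : Fin r → ℝ) : 0 ≤ ⨆ i, |v i| :=
  le_trans (abs_nonneg _) (aux_le_sup v (Classical.arbitrary _))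

lemma aux_sup_smul (c : ℝ) (hc : 0 ≤ c) (v : Fin r → ℝ) :
    (⨆ i, |c * v i|) = c * ⨆ i, |v i| := by
  rw [Real.mul_iSup_of_nonneg hc]
  congr 1; ext i; rw [abs_mul, abs_of_nonneg hc]
end helpers


/-- Uniqueness from strict dual feasibility: consider
`f(B) = (1/2n)∑_i ‖y^i − X^i β^i‖₂² + λ‖B‖_{1,∞}` with `λ > 0`. Suppose `B̂` vanishing
off `U` is optimal and there is `Z̃` in the subdifferential of `‖·‖_{1,∞}` at `B̂`
satisfying the stationarity conditions and the strict dual feasibility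
`∑_i |Z̃_{j,i}| < 1` for every `j ∉ U`. If each `X^i_U` has linearly independent
columns (i.e. `(X^i_U)ᵀX^i_U` is invertible), then every optimal solution vanishes off
`U` and the optimal solution is unique, i.e. equals `B̂`. -/
theorem stmt_16 (n p r : ℕ) (hn : 0 < n) (hr : 0 < r) (lam : ℝ) (hlam : 0 < lam)
    (y : Fin r → Fin n → ℝ) (X : Fin r → Matrix (Fin n) (Fin p) ℝ)
    (U : Finset (Fin p))
    (Bhat : Matrix (Fin p) (Fin r) ℝ)
    (hsupp : ∀ j ∉ U, ∀ i, Bhat j i = 0)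
    (hopt : ∀ B : Matrix (Fin p) (Fin r) ℝ,
        (1 / (2 * (n : ℝ))) * (∑ i, ∑ k, (y i k - ∑ j, X i k j * Bhat j i) ^ 2)
            + lam * ∑ j, ⨆ i, |Bhat j i|
          ≤ (1 / (2 * (n : ℝ))) * (∑ i, ∑ k, (y i k - ∑ j, X i k j * B j i) ^ 2)
            + lam * ∑ j, ⨆ i, |B j i|)
    (Zt : Matrix (Fin p) (Fin r) ℝ)
    (hZsub : ∀ B' : Matrix (Fin p) (Fin r) ℝ,
        (∑ j, ⨆ i, |Bhat j i|) + ∑ j, ∑ i, Zt j i * (B' j i - Bhat j i)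
          ≤ ∑ j, ⨆ i, |B' j i|)
    (hstat : ∀ i j,
        (1 / (n : ℝ)) * (∑ k, X i k j * (∑ j', X i k j' * Bhat j' i))
          - (1 / (n : ℝ)) * (∑ k, X i k j * y i k) + lam * Zt j i = 0)
    (hstrict : ∀ j ∉ U, ∑ i, |Zt j i| < 1)
    (hinv : ∀ i, ∀ c : Fin p → ℝ, (∀ j ∉ U, c j = 0) →
        (∀ k, ∑ j, X i k j * c j = 0) → ∀ j, c j = 0) :
    ∀ B : Matrix (Fin p) (Fin r) ℝ,
      (∀ B' : Matrix (Fin p) (Fin r) ℝ,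
        (1 / (2 * (n : ℝ))) * (∑ i, ∑ k, (y i k - ∑ j, X i k j * B j i) ^ 2)
            + lam * ∑ j, ⨆ i, |B j i|
          ≤ (1 / (2 * (n : ℝ))) * (∑ i, ∑ k, (y i k - ∑ j, X i k j * B' j i) ^ 2)
            + lam * ∑ j, ⨆ i, |B' j i|) →
      (∀ j ∉ U, ∀ i, B j i = 0) ∧ B = Bhat := by
  haveI : Nonempty (Fin r) := ⟨⟨0, hr⟩⟩
  have hnpos : (0:ℝ) < (n:ℝ) := by exact_mod_cast hn
  have hc : (0:ℝ) < 1 / (2 * (n:ℝ)) := by positivity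
  intro B hBopt
  -- Step 1: objective values are equal
  have hfeq : (1 / (2 * (n : ℝ))) * (∑ i, ∑ k, (y i k - ∑ j, X i k j * B j i) ^ 2)
      + lam * ∑ j, ⨆ i, |B j i|
      = (1 / (2 * (n : ℝ))) * (∑ i, ∑ k, (y i k - ∑ j, X i k j * Bhat j i) ^ 2)
      + lam * ∑ j, ⨆ i, |Bhat j i| :=
    le_antisymm (hBopt Bhat) (hopt B)
  -- Step 2: the fitted values agree
  have hres : ∀ i k, (∑ j, X i k j * B j i) = ∑ j, X i k j * Bhat j i := by
    set M : Matrix (Fin p) (Fin r) ℝ := fun j i => (B j i + Bhat j i) / 2 with hM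
    have hMres : ∀ i k, (∑ j, X i k j * M j i)
        = ((∑ j, X i k j * B j i) + ∑ j, X i k j * Bhat j i) / 2 := by
      intro i k
      rw [← Finset.sum_add_distrib, Finset.sum_div]
      exact Finset.sum_congr rfl fun j _ => by simp only [hM]; ring
    have hQM : (∑ i, ∑ k, (y i k - ∑ j, X i k j * M j i) ^ 2)
        = ((∑ i, ∑ k, (y i k - ∑ j, X i k j * B j i) ^ 2)
            + (∑ i, ∑ k, (y i k - ∑ j, X i k j * Bhat j i) ^ 2)) / 2
          - (∑ i, ∑ k, ((∑ j, X i k j * B j i) - ∑ j, X i k j * Bhat j i) ^ 2) / 4 := by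
      rw [← Finset.sum_add_distrib, Finset.sum_div, Finset.sum_div,
        ← Finset.sum_sub_distrib]
      refine Finset.sum_congr rfl fun i _ => ?_
      rw [← Finset.sum_add_distrib, Finset.sum_div, Finset.sum_div,
        ← Finset.sum_sub_distrib]
      refine Finset.sum_congr rfl fun k _ => ?_
      rw [hMres i k]; ring
    have hNM : (∑ j, ⨆ i, |M j i|)
        ≤ ((∑ j, ⨆ i, |B j i|) + ∑ j, ⨆ i, |Bhat j i|) / 2 := by
      rw [← Finset.sum_add_distrib, Finset.sum_div]
      refine Finset.sum_le_sum fun j _ => ?_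
      refine aux_sup_le _ fun i => ?_
      have h1 := aux_le_sup (fun i => B j i) i
      have h2 := aux_le_sup (fun i => Bhat j i) i
      have h3 : |M j i| ≤ (|B j i| + |Bhat j i|) / 2 := by
        have := abs_add_le (B j i) (Bhat j i)
        have h4 : |M j i| = |B j i + Bhat j i| / 2 := by
          simp only [hM]; rw [abs_div]; norm_num
        linarith
      linarith
    have hM_opt := hopt M
    set D := ∑ i, ∑ k, ((∑ j, X i k j * B j i) - ∑ j, X i k j * Bhat j i) ^ 2 with hD
    have hDnn : 0 ≤ D :=
      Finset.sum_nonneg fun i _ => Finset.sum_nonneg fun k _ => sq_nonneg _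
    have hcD : 1 / (2 * (n:ℝ)) * D ≤ 0 := by
      rw [hQM] at hM_opt
      have h5 : lam * (∑ j, ⨆ i, |M j i|)
          ≤ lam * (((∑ j, ⨆ i, |B j i|) + ∑ j, ⨆ i, |Bhat j i|) / 2) :=
        mul_le_mul_of_nonneg_left hNM hlam.le
      nlinarith [hM_opt, h5, hfeq]
    have hD0 : D = 0 := by
      have := le_antisymm hcD (mul_nonneg hc.le hDnn)
      rcases mul_eq_zero.mp this with h | h
      · exact absurd h (ne_of_gt hc)
      · exact h
    intro i k
    have h6 := (Finset.sum_eq_zero_iff_of_nonneg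
      (fun i _ => Finset.sum_nonneg fun k _ => sq_nonneg _)).mp hD0 i (Finset.mem_univ i)
    have h7 := (Finset.sum_eq_zero_iff_of_nonneg
      (fun k _ => sq_nonneg _)).mp h6 k (Finset.mem_univ k)
    have := pow_eq_zero_iff (n := 2) (by norm_num) |>.mp h7
    linarith [this]
  -- Step 3: ⟨Z, Bhat⟩ = ‖Bhat‖
  have hZBhat : (∑ j, ∑ i, Zt j i * Bhat j i) = ∑ j, ⨆ i, |Bhat j i| := by
    have h0 := hZsub 0
    simp only [Matrix.zero_apply, zero_sub, mul_neg, Finset.sum_neg_distrib, abs_zero,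
      ciSup_const, Finset.sum_const_zero] at h0
    have h2 := hZsub (fun j i => 2 * Bhat j i)
    have hN2 : (∑ j, ⨆ i, |2 * Bhat j i|) = 2 * ∑ j, ⨆ i, |Bhat j i| := by
      rw [Finset.mul_sum]
      exact Finset.sum_congr rfl fun j _ => aux_sup_smul 2 (by norm_num) fun i => Bhat j i
    have hS2 : (∑ j, ∑ i, Zt j i * (2 * Bhat j i - Bhat j i))
        = ∑ j, ∑ i, Zt j i * Bhat j i := by
      refine Finset.sum_congr rfl fun j _ => Finset.sum_congr rfl fun i _ => by ring
    rw [hS2, hN2] at h2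
    linarith
  -- dual feasibility pairing bound
  have hdual : ∀ C : Matrix (Fin p) (Fin r) ℝ,
      (∑ j, ∑ i, Zt j i * C j i) ≤ ∑ j, ⨆ i, |C j i| := by
    intro C
    have h := hZsub C
    have hsplit : (∑ j, ∑ i, Zt j i * (C j i - Bhat j i))
        = (∑ j, ∑ i, Zt j i * C j i) - ∑ j, ∑ i, Zt j i * Bhat j i := by
      rw [← Finset.sum_sub_distrib]
      refine Finset.sum_congr rfl fun j _ => ?_
      rw [← Finset.sum_sub_distrib]
      exact Finset.sum_congr rfl fun i _ => by ring
    rw [hsplit, hZBhat] at h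
    linarith
  -- Step 4: row dual norms at most 1
  have hrow : ∀ j, (∑ i, |Zt j i|) ≤ 1 := by
    intro j
    set E : Matrix (Fin p) (Fin r) ℝ :=
      fun j' i => if j' = j then (if Zt j i < 0 then -1 else 1) else 0 with hE
    have h := hdual E
    have hL : (∑ j', ∑ i, Zt j' i * E j' i) = ∑ i, |Zt j i| := by
      rw [Finset.sum_eq_single j]
      · refine Finset.sum_congr rfl fun i _ => ?_
        simp only [hE, if_pos rfl]
        by_cases hz : Zt j i < 0
        · rw [if_pos hz, abs_of_neg hz]; ring
        · rw [if_neg hz, abs_of_nonneg (not_lt.mp hz)]; ring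
      · intro b _ hb
        refine Finset.sum_eq_zero fun i _ => ?_
        simp only [hE, if_neg hb, mul_zero]
      · intro hj; exact absurd (Finset.mem_univ j) hj
    have hR : (∑ j', ⨆ i, |E j' i|) = 1 := by
      rw [Finset.sum_eq_single j]
      · have : ∀ i, |E j i| = 1 := by
          intro i
          simp only [hE, if_pos rfl]
          by_cases hz : Zt j i < 0 <;> simp [hz]
        calc (⨆ i, |E j i|) = ⨆ _ : Fin r, (1:ℝ) := by
              congr 1; ext i; exact this i
          _ = 1 := ciSup_const
      · intro b _ hb
        have : ∀ i, |E b i| = 0 := by intro i; simp [hE, hb]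
        calc (⨆ i, |E b i|) = ⨆ _ : Fin r, (0:ℝ) := by
              congr 1; ext i; exact this i
          _ = 0 := ciSup_const
      · intro hj; exact absurd (Finset.mem_univ j) hj
    rw [hL, hR] at h
    exact h
  -- Step 5: ⟨Z, B - Bhat⟩ = 0
  have hZdiff : ∀ i, (∑ j, Zt j i * (B j i - Bhat j i)) = 0 := by
    intro i
    have hcol : ∀ k, (∑ j, X i k j * (B j i - Bhat j i)) = 0 := by
      intro k
      simp only [mul_sub, Finset.sum_sub_distrib]
      rw [hres i k]; ring
    have hst : ∀ j, lam * Zt j i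
        = (1/(n:ℝ)) * (∑ k, X i k j * (y i k - ∑ j', X i k j' * Bhat j' i)) := by
      intro j
      have h := hstat i j
      have hsplit : (∑ k, X i k j * (y i k - ∑ j', X i k j' * Bhat j' i))
          = (∑ k, X i k j * y i k) - ∑ k, X i k j * (∑ j', X i k j' * Bhat j' i) := by
        rw [← Finset.sum_sub_distrib]
        exact Finset.sum_congr rfl fun k _ => by ring
      rw [hsplit, mul_sub]
      linarith
    have h0 : (∑ j, (lam * Zt j i) * (B j i - Bhat j i)) = 0 := by
      calc (∑ j, (lam * Zt j i) * (B j i - Bhat j i))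
          = ∑ j, ∑ k, 1/(n:ℝ) * (X i k j * (y i k - ∑ j', X i k j' * Bhat j' i))
              * (B j i - Bhat j i) := by
            refine Finset.sum_congr rfl fun j _ => ?_
            rw [hst j, Finset.mul_sum, Finset.sum_mul]
        _ = ∑ k, ∑ j, 1/(n:ℝ) * (X i k j * (y i k - ∑ j', X i k j' * Bhat j' i))
              * (B j i - Bhat j i) := Finset.sum_comm
        _ = 0 := by
            refine Finset.sum_eq_zero fun k _ => ?_
            have : (∑ j, 1/(n:ℝ) * (X i k j * (y i k - ∑ j', X i k j' * Bhat j' i))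
                * (B j i - Bhat j i))
                = (1/(n:ℝ) * (y i k - ∑ j', X i k j' * Bhat j' i))
                  * ∑ j, X i k j * (B j i - Bhat j i) := by
              rw [Finset.mul_sum]
              exact Finset.sum_congr rfl fun j _ => by ring
            rw [this, hcol k, mul_zero]
    have h1 : (∑ j, (lam * Zt j i) * (B j i - Bhat j i))
        = lam * ∑ j, Zt j i * (B j i - Bhat j i) := by
      rw [Finset.mul_sum]
      exact Finset.sum_congr rfl fun j _ => by ring
    rw [h1] at h0
    exact (mul_eq_zero.mp h0).resolve_left (ne_of_gt hlam)
  -- ⟨Z, B⟩ = ‖Bhat‖ = ‖B‖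
  have hQeq : (∑ i, ∑ k, (y i k - ∑ j, X i k j * B j i) ^ 2)
      = ∑ i, ∑ k, (y i k - ∑ j, X i k j * Bhat j i) ^ 2 :=
    Finset.sum_congr rfl fun i _ => Finset.sum_congr rfl fun k _ => by rw [hres i k]
  have hNeq : (∑ j, ⨆ i, |B j i|) = ∑ j, ⨆ i, |Bhat j i| := by
    rw [hQeq] at hfeq
    have := mul_left_cancel₀ (ne_of_gt hlam) (by linarith : lam * (∑ j, ⨆ i, |B j i|)
      = lam * ∑ j, ⨆ i, |Bhat j i|)
    exact this
  have hZB : (∑ j, ∑ i, Zt j i * B j i) = ∑ j, ⨆ i, |B j i| := by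
    have hsw : (∑ j, ∑ i, Zt j i * (B j i - Bhat j i))
        = ∑ i, ∑ j, Zt j i * (B j i - Bhat j i) := Finset.sum_comm
    have hz : (∑ j, ∑ i, Zt j i * (B j i - Bhat j i)) = 0 := by
      rw [hsw]; exact Finset.sum_eq_zero fun i _ => hZdiff i
    have hsplit : (∑ j, ∑ i, Zt j i * (B j i - Bhat j i))
        = (∑ j, ∑ i, Zt j i * B j i) - ∑ j, ∑ i, Zt j i * Bhat j i := by
      rw [← Finset.sum_sub_distrib]
      refine Finset.sum_congr rfl fun j _ => ?_
      rw [← Finset.sum_sub_distrib]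
      exact Finset.sum_congr rfl fun i _ => by ring
    rw [hsplit] at hz
    rw [hZBhat] at hz
    rw [hNeq]
    linarith
  -- Step 6: rows off U vanish
  have hrowB : ∀ j, (∑ i, Zt j i * B j i) ≤ ⨆ i, |B j i| := by
    intro j
    have h1 : (∑ i, Zt j i * B j i) ≤ (∑ i, |Zt j i|) * ⨆ i, |B j i| := by
      rw [Finset.sum_mul]
      refine Finset.sum_le_sum fun i _ => ?_
      calc Zt j i * B j i ≤ |Zt j i * B j i| := le_abs_self _
        _ = |Zt j i| * |B j i| := abs_mul _ _
        _ ≤ |Zt j i| * ⨆ i', |B j i'| :=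
            mul_le_mul_of_nonneg_left (aux_le_sup (fun i' => B j i') i) (abs_nonneg _)
    calc (∑ i, Zt j i * B j i) ≤ (∑ i, |Zt j i|) * ⨆ i, |B j i| := h1
      _ ≤ 1 * ⨆ i, |B j i| :=
          mul_le_mul_of_nonneg_right (hrow j) (aux_sup_nonneg _)
      _ = ⨆ i, |B j i| := one_mul _
  have hterm : ∀ j ∈ Finset.univ, (∑ i, Zt j i * B j i) = ⨆ i, |B j i| :=
    (Finset.sum_eq_sum_iff_of_le (fun j _ => hrowB j)).mp hZB
  have hBU : ∀ j ∉ U, ∀ i, B j i = 0 := by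
    intro j hj i
    have hsj := hstrict j hj
    have hMj : (⨆ i, |B j i|) = 0 := by
      by_contra hne
      have hMpos : 0 < ⨆ i, |B j i| :=
        lt_of_le_of_ne (aux_sup_nonneg _) (Ne.symm hne)
      have hb : (∑ i, Zt j i * B j i) ≤ (∑ i, |Zt j i|) * ⨆ i, |B j i| := by
        rw [Finset.sum_mul]
        refine Finset.sum_le_sum fun i _ => ?_
        calc Zt j i * B j i ≤ |Zt j i * B j i| := le_abs_self _
          _ = |Zt j i| * |B j i| := abs_mul _ _
          _ ≤ |Zt j i| * ⨆ i', |B j i'| :=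
              mul_le_mul_of_nonneg_left (aux_le_sup (fun i' => B j i') i) (abs_nonneg _)
      have h1 : (⨆ i, |B j i|) ≤ (∑ i, |Zt j i|) * ⨆ i, |B j i| :=
        (hterm j (Finset.mem_univ j)) ▸ hb
      nlinarith
    have := aux_le_sup (fun i' => B j i') i
    rw [hMj] at this
    exact abs_eq_zero.mp (le_antisymm this (abs_nonneg _))
  refine ⟨hBU, ?_⟩
  -- Step 7: uniqueness
  ext j i
  have hcol : ∀ k, (∑ j', X i k j' * (B j' i - Bhat j' i)) = 0 := by
    intro k
    simp only [mul_sub, Finset.sum_sub_distrib]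
    rw [hres i k]; ring
  have := hinv i (fun j' => B j' i - Bhat j' i)
    (fun j' hj' => by show B j' i - Bhat j' i = 0; rw [hBU j' hj' i, hsupp j' hj' i]; ring) hcol j
  linarith
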